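/- Let n ≥ 1, let F : ℝⁿ → ℝⁿ be a continuously differentiable map (with ℝⁿ carrying the Euclidean norm), and let a > 0 and r > 0 be such that ‖dF_x(v)‖ ≥ a ‖v‖ for every x with ‖x‖ ≤ r and every v ∈ ℝⁿ. Then for every b with 0 < b < a·r, every point p with ‖p − F(0)‖ < b belongs to the image under F of the closed ball { x ∈ ℝⁿ : ‖x‖ ≤ b/a }; that is, { p : ‖p − F(0)‖ < b } ⊆ F( { x : ‖x‖ ≤ b/a } ). -/

import Mathlib

/-!
Quantitative open-image lemma (Lemma 4.6, Contreras–Paternain): if `F : ℝⁿ → ℝⁿ`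
is C¹ and `‖dF_x(v)‖ ≥ a‖v‖` for `‖x‖ ≤ r`, then for every `0 < b < a·r` the ball
of radius `b` around `F(0)` is contained in the image of the closed ball of
radius `b/a` around `0`.
-/

noncomputable section

abbrev Euc (n : ℕ) := EuclideanSpace ℝ (Fin n)

set_option maxHeartbeats 1000000 in
theorem quantitative_open_image {n : ℕ} (hn : 1 ≤ n)
    (F : Euc n → Euc n) (hF : ContDiff ℝ 1 F)
    (a r : ℝ) (ha : 0 < a) (hr : 0 < r)
    (hd : ∀ x : Euc n, ‖x‖ ≤ r → ∀ v : Euc n, a * ‖v‖ ≤ ‖fderiv ℝ F x v‖) :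
    ∀ b : ℝ, 0 < b → b < a * r →
      Metric.ball (F 0) b ⊆ F '' Metric.closedBall 0 (b / a) := by
  intro b hb hbar p hp
  set ρ : ℝ := b / a with hρ
  have hρ0 : 0 < ρ := div_pos hb ha
  have hρr : ρ ≤ r := le_of_lt ((div_lt_iff₀' ha).mpr hbar)
  set c : ℝ := ‖p - F 0‖ with hc
  have hcb : c < b := by
    simpa [hc, dist_eq_norm] using hp
  have hc0 : 0 ≤ c := norm_nonneg _
  -- the compact set of pairs (t, x) with F x = F 0 + t • (p - F 0) and ‖x‖ ≤ t * ρ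
  set K : Set (ℝ × Euc n) :=
    {q | q.1 ∈ Set.Icc (0:ℝ) 1 ∧ ‖q.2‖ ≤ q.1 * ρ ∧ F q.2 = F 0 + q.1 • (p - F 0)} with hK
  have hKcl : IsClosed K := by
    apply IsClosed.inter
    · exact isClosed_Icc.preimage continuous_fst
    apply IsClosed.inter
    · exact isClosed_le continuous_snd.norm (continuous_fst.mul continuous_const)
    · exact isClosed_eq (hF.continuous.comp continuous_snd)
        (continuous_const.add (continuous_fst.smul continuous_const))
  have hKsub : K ⊆ Set.Icc (0:ℝ) 1 ×ˢ Metric.closedBall (0 : Euc n) ρ := by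
    rintro ⟨t, x⟩ ⟨ht, hx, -⟩
    refine ⟨ht, ?_⟩
    rw [Metric.mem_closedBall, dist_zero_right]
    calc ‖x‖ ≤ t * ρ := hx
      _ ≤ 1 * ρ := by nlinarith [ht.2, hρ0]
      _ = ρ := one_mul ρ
  have hKcomp : IsCompact K :=
    ((isCompact_Icc).prod (isCompact_closedBall _ _)).of_isClosed_subset hKcl hKsub
  set S : Set ℝ := Prod.fst '' K with hS
  have hScomp : IsCompact S := hKcomp.image continuous_fst
  have hS0 : (0:ℝ) ∈ S := by
    refine ⟨(0, 0), ⟨?_, ?_, ?_⟩, rfl⟩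
    · exact ⟨le_refl 0, zero_le_one⟩
    · simp
    · simp
  set T : ℝ := sSup S with hT
  have hTS : T ∈ S := hScomp.sSup_mem ⟨0, hS0⟩
  obtain ⟨⟨t₀, x⟩, ⟨hTIcc, hxnorm, hxeq⟩, ht₀⟩ := hTS
  have ht₀T : t₀ = T := ht₀
  subst ht₀T
  have hT1 : T = 1 := by
    by_contra hne
    have hTlt : T < 1 := lt_of_le_of_ne hTIcc.2 hne
    -- x is in the ball of radius ρ ≤ r
    have hxρ : ‖x‖ ≤ ρ := by
      calc ‖x‖ ≤ T * ρ := hxnorm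
        _ ≤ 1 * ρ := by nlinarith [hTIcc.2, hρ0]
        _ = ρ := one_mul ρ
    have hxr : ‖x‖ ≤ r := hxρ.trans hρr
    set L : Euc n →L[ℝ] Euc n := fderiv ℝ F x with hL
    have hLlow : ∀ v : Euc n, a * ‖v‖ ≤ ‖L v‖ := hd x hxr
    have hinj : Function.Injective L := by
      intro u v huv
      have h0 : L (u - v) = 0 := by rw [map_sub, huv, sub_self]
      have := hLlow (u - v)
      rw [h0, norm_zero] at this
      have : ‖u - v‖ ≤ 0 := by
        by_contra hpos
        push_neg at hpos
        nlinarith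
      have : u - v = 0 := by
        have := le_antisymm this (norm_nonneg _)
        exact norm_eq_zero.mp this
      exact sub_eq_zero.mp this
    set eL : Euc n ≃ₗ[ℝ] Euc n :=
      LinearEquiv.ofInjectiveEndo (L : Euc n →ₗ[ℝ] Euc n) hinj with heL
    have heL_apply : ∀ v, eL v = L v := fun v => by
      rw [heL]; rw [LinearEquiv.ofInjectiveEndo]; rfl
    have hrightinv : ∀ y, L (eL.symm y) = y := fun y => by
      have := eL.apply_symm_apply y
      rwa [heL_apply] at this
    -- the nonlinear right inverse with norm a⁻¹
    set rinv : L.NonlinearRightInverse :=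
      { toFun := fun y => eL.symm y
        nnnorm := ⟨a⁻¹, by positivity⟩
        bound' := by
          intro y
          have h1 : a * ‖eL.symm y‖ ≤ ‖L (eL.symm y)‖ := hLlow _
          rw [hrightinv] at h1
          have := (le_div_iff₀' ha).mpr h1
          rw [div_eq_inv_mul] at this
          exact this
        right_inv' := hrightinv } with hrinv
    -- the approximation constant
    set ε : ℝ := a * (b - c) / (2 * b) with hε
    have hε0 : 0 < ε := by
      apply div_pos
      · nlinarith
      · nlinarith
    have hεa : ε < a := by
      rw [hε, div_lt_iff₀ (by nlinarith : (0:ℝ) < 2 * b)]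
      nlinarith
    set εnn : NNReal := ⟨ε, le_of_lt hε0⟩ with hεnn
    have hstrict : HasStrictFDerivAt F L x :=
      (hF.contDiffAt).hasStrictFDerivAt one_ne_zero
    obtain ⟨s, hs_nhds, hs_approx⟩ :=
      hstrict.approximates_deriv_on_nhds (Or.inr (show (0:NNReal) < εnn from hε0))
    obtain ⟨δ0, hδ00, hδ0s⟩ := Metric.nhds_basis_closedBall.mem_iff.mp hs_nhds
    -- step size
    set η : ℝ := min (1 - T) (δ0 * a / b) with hη
    have hη0 : 0 < η := lt_min (by linarith) (by positivity)
    set δ : ℝ := η * ρ with hδ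
    have hδpos : 0 < δ := mul_pos hη0 hρ0
    have hδδ0 : δ ≤ δ0 := by
      have h1 : η ≤ δ0 * a / b := min_le_right _ _
      have h2 : η * (b / a) ≤ δ0 * a / b * (b / a) :=
        mul_le_mul_of_nonneg_right h1 (by positivity)
      have h3 : δ0 * a / b * (b / a) = δ0 := by field_simp
      rw [hδ, hρ, ← h3]; exact h2
    have happrox : ApproximatesLinearOn F L (Metric.closedBall x δ) εnn :=
      hs_approx.mono_set ((Metric.closedBall_subset_closedBall hδδ0).trans hδ0s)
    have hsurj := happrox.surjOn_closedBall_of_nonlinearRightInverse rinv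
      (le_of_lt hδpos) (subset_refl _)
    -- target point
    set s' : ℝ := T + η with hs'
    set y : Euc n := F 0 + s' • (p - F 0) with hy
    have hymem : y ∈ Metric.closedBall (F x) (((rinv.nnnorm : ℝ)⁻¹ - (εnn:ℝ)) * δ) := by
      rw [Metric.mem_closedBall, dist_eq_norm]
      have h1 : y - F x = η • (p - F 0) := by
        rw [hy, hxeq, hs', add_smul]
        abel
      rw [h1, norm_smul, Real.norm_eq_abs, abs_of_pos hη0]
      have hnn : (rinv.nnnorm : ℝ) = a⁻¹ := rfl
      have hεc : (εnn : ℝ) = ε := rfl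
      rw [hnn, hεc, inv_inv]
      -- η * c ≤ (a - ε) * (η * ρ)
      have hkey : c ≤ (a - ε) * ρ := by
        rw [hρ, hε]
        have h4 : (a - a * (b - c) / (2 * b)) * (b / a) = (b + c) / 2 := by
          field_simp; ring
        rw [h4]; linarith
      calc η * c ≤ η * ((a - ε) * ρ) := mul_le_mul_of_nonneg_left hkey (le_of_lt hη0)
        _ = (a - ε) * (η * ρ) := by ring
        _ = (a - ε) * δ := by rw [hδ]
    obtain ⟨x', hx'ball, hx'eq⟩ := hsurj hymem
    -- s' ∈ S, contradicting maximality of T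
    have hs'S : s' ∈ S := by
      refine ⟨(s', x'), ⟨⟨by have hT0 : (0:ℝ) ≤ T := hTIcc.1; rw [hs']; linarith, ?_⟩, ?_, hx'eq⟩, rfl⟩
      · rw [hs']; have := min_le_left (1 - T) (δ0 * a / b); rw [← hη] at this; linarith
      · calc ‖x'‖ ≤ ‖x‖ + δ := by
              have := Metric.mem_closedBall.mp hx'ball
              rw [dist_eq_norm] at this
              calc ‖x'‖ = ‖x + (x' - x)‖ := by rw [show x + (x' - x) = x' from by abel]
                _ ≤ ‖x‖ + ‖x' - x‖ := norm_add_le _ _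
                _ ≤ ‖x‖ + δ := by linarith
          _ ≤ T * ρ + η * ρ := by rw [hδ]; linarith
          _ = s' * ρ := by rw [hs']; ring
    have : s' ≤ T := le_csSup hScomp.bddAbove hs'S
    rw [hs'] at this
    linarith
  refine ⟨x, ?_, ?_⟩
  · rw [Metric.mem_closedBall, dist_zero_right]
    rw [hT1] at hxnorm
    simpa using hxnorm
  · rw [hxeq, hT1, one_smul]
    abel
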